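/- Let δ be regular uncountable, H a structure of size δ, and suppose σ : H → H̃ is the branch-direct-limit embedding of Lemma 1.2 where the distinguished ordinals η along the branch satisfy sup(λ ∩ h[A_ξ]) < η < λ with λ = On ∩ H. Then sup σ''λ < On ∩ H̃; i.e., the embedding is discontinuous at λ and H̃ has ordinals above the supremum of the pointwise image of λ. -/
import Mathlib

open FirstOrder Cardinal

/-- The language of set theory: a single binary relation. -/
def memRelTy : ℕ → Type := fun n => match n with | 2 => PUnit | _ => Empty

/-- The language of set theory. -/
def Lmem : FirstOrder.Language := ⟨fun _ => Empty, memRelTy⟩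

/-- The membership relation symbol. -/
def memRel : Lmem.Relations 2 := PUnit.unit

/-- Any (transitive) set `M` of `ZFSet`s is an `∈`-structure. -/
instance zMemStruct (M : ZFSet) : Lmem.Structure {x : ZFSet // x ∈ M} where
  funMap := fun f _ => Empty.elim f
  RelMap := fun {n} r x =>
    match n, r, x with
    | 2, _, x => (x 0).1 ∈ (x 1).1

/-- `σ : M → N` is `κ`-complete: for every elementary `τ : P → N` with `|P| < κ` there is
an elementary `π : P → M` with `σ (π x) = τ x` whenever `τ x ∈ ran σ`. -/
def IsCompleteEmbedding (L : FirstOrder.Language) {M N : Type 1} [L.Structure M]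
    [L.Structure N] (κ : Cardinal.{1}) (σ : M ↪ₑ[L] N) : Prop :=
  ∀ (P : Type 1) (_ : L.Structure P) (τ : P ↪ₑ[L] N), #P < κ →
    ∃ π : P ↪ₑ[L] M, ∀ x : P, (∃ y, σ y = τ x) → σ (π x) = τ x

/-- `f` is a (set) surjection from `A` onto `B`. -/
def IsSurjZFun (A B f : ZFSet) : Prop :=
  ZFSet.IsFunc A B f ∧ ∀ y ∈ B, ∃ x ∈ A, ZFSet.pair x y ∈ f

/-- `f` is a (set) injection from `A` into `B`. -/
def IsInjZFun (A B f : ZFSet) : Prop :=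
  ZFSet.IsFunc A B f ∧ ∀ x x' y : ZFSet, x ∈ A → x' ∈ A →
    ZFSet.pair x y ∈ f → ZFSet.pair x' y ∈ f → x = x'

/-- `κ` is a cardinal in the sense of the (inner) model `W`: an ordinal not surjected
onto by a smaller ordinal via a function belonging to `W`. -/
def WIsCardinal (W : Set ZFSet) (κ : ZFSet) : Prop :=
  κ.IsOrdinal ∧ ∀ β f : ZFSet, β ∈ κ → f ∈ W → ¬ IsSurjZFun β κ f

/-- `lam = δ⁺ᵂ`: the successor of `d` as computed in `W`. -/
def WSuccOf (W : Set ZFSet) (d lam : ZFSet) : Prop :=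
  lam.IsOrdinal ∧ d ∈ lam ∧ WIsCardinal W lam ∧
    ∀ β : ZFSet, β ∈ lam → WIsCardinal W β → β ∈ d ∨ β = d

/-- `W` is an inner model: a transitive class containing all ordinals and closed under
basic ZFC-style operations (collapsing of non-cardinals, images and restrictions of
functions). -/
def IsInnerModel (W : Set ZFSet) : Prop :=
  (∀ x ∈ W, ∀ y ∈ x, y ∈ W) ∧
  (∀ x : ZFSet, x.IsOrdinal → x ∈ W) ∧
  (∀ α : ZFSet, α.IsOrdinal → ¬ WIsCardinal W α →
    ∃ β f : ZFSet, β ∈ α ∧ f ∈ W ∧ IsSurjZFun β α f) ∧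
  (∀ f a : ZFSet, f ∈ W → a ∈ W →
    ∃ b : ZFSet, b ∈ W ∧ ∀ y : ZFSet, y ∈ b ↔ ∃ x : ZFSet, x ∈ a ∧ ZFSet.pair x y ∈ f) ∧
  (∀ f a : ZFSet, f ∈ W → a ∈ W →
    ∃ g : ZFSet, g ∈ W ∧ ∀ p : ZFSet, p ∈ g ↔
      (p ∈ f ∧ ∃ x y : ZFSet, x ∈ a ∧ p = ZFSet.pair x y))

/-- `g : d.toSet → ZFSet` is a cofinal map (in `V`) into the ordinal `lam`. -/
def VCofinalMap (e lam : ZFSet) (g : {x : ZFSet // x ∈ e} → ZFSet) : Prop :=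
  (∀ x, g x ∈ lam) ∧ ∀ y ∈ lam, ∃ x, y ∈ g x ∨ y = g x

/-- `cf(lam) = |d|` computed in `V`. -/
def VCofEq (d lam : ZFSet) : Prop :=
  (∃ g, VCofinalMap d lam g) ∧ ∀ e ∈ d, ¬ ∃ g, VCofinalMap e lam g

/-- The ordinal `d` is a regular cardinal (in `V`). -/
def VRegularCardinal (d : ZFSet) : Prop :=
  d.IsOrdinal ∧ (Cardinal.mk d.toSet).IsRegular ∧
    ∀ e ∈ d, Cardinal.mk e.toSet < Cardinal.mk d.toSet

/-- `p` is the powerset of `κ` as computed in `W`. -/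
def WPowerset (W : Set ZFSet) (κ p : ZFSet) : Prop :=
  p ∈ W ∧ ∀ x : ZFSet, x ∈ p ↔ (x ∈ W ∧ x ⊆ κ)

/-- `d` is (strongly) inaccessible in `W`. -/
def WInaccessible (W : Set ZFSet) (d : ZFSet) : Prop :=
  WIsCardinal W d ∧
  (∀ e f : ZFSet, e ∈ d → f ∈ W → ¬ (ZFSet.IsFunc e d f ∧
      ∀ y ∈ d, ∃ x w : ZFSet, x ∈ e ∧ ZFSet.pair x w ∈ f ∧ (y ∈ w ∨ y = w))) ∧
  (∀ e ∈ d, ∃ κ : ZFSet, κ ∈ d ∧ e ∈ κ ∧ WIsCardinal W κ) ∧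
  (∀ κ p : ZFSet, κ ∈ d → WIsCardinal W κ → WPowerset W κ p →
    ∃ e f : ZFSet, e ∈ d ∧ f ∈ W ∧ IsInjZFun p e f)

/-- `π` is elementary (for `∈`-formulas) on the subset `S` of the transitive set `M`,
as a partial map from `M` to `N`. -/
def ElemOnSub (M N : ZFSet) (S : Set ZFSet)
    (π : {a : ZFSet // a ∈ M} → {a : ZFSet // a ∈ N}) : Prop :=
  ∀ (n : ℕ) (φ : Lmem.Formula (Fin n)) (x : Fin n → {a : ZFSet // a ∈ M}),
    (∀ i, (x i).1 ∈ S) → (φ.Realize x ↔ φ.Realize (π ∘ x))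

open FirstOrder.Language FirstOrder.Language.BoundedFormula

/-- the atomic membership formula -/
def memB {n : ℕ} (t₁ t₂ : Lmem.Term (Fin 1 ⊕ Fin n)) : Lmem.BoundedFormula (Fin 1) n :=
  memRel.boundedFormula₂ t₁ t₂

def xvar {n : ℕ} : Lmem.Term (Fin 1 ⊕ Fin n) := FirstOrder.Language.Term.var (Sum.inl 0)

/-- "x is transitive and ∈-transitive" -/
def ordFormula : Lmem.Formula (Fin 1) :=
  (∀' (memB &0 xvar ⟹ ∀' (memB &1 &0 ⟹ memB &1 xvar))) ⊓
  (∀' ∀' ∀' (memB &0 &1 ⟹ memB &1 &2 ⟹ memB &2 xvar ⟹ memB &0 &2))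

def memFormula : Lmem.Formula (Fin 2) :=
  memRel.formula₂ (FirstOrder.Language.Term.var 0) (FirstOrder.Language.Term.var 1)

@[simp] theorem relMap_mem (M : ZFSet) (a : Fin 2 → {x : ZFSet // x ∈ M}) :
    FirstOrder.Language.Structure.RelMap (L := Lmem) (M := {x : ZFSet // x ∈ M}) memRel a ↔
      (a 0).1 ∈ (a 1).1 := Iff.rfl

theorem realize_memFormula (M : ZFSet) (a b : {x : ZFSet // x ∈ M}) :
    memFormula.Realize (M := {x : ZFSet // x ∈ M}) ![a, b] ↔ a.1 ∈ b.1 := by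
  simp only [memFormula, Formula.realize_rel₂, Term.realize_var, relMap_mem (a := ![a,b])]
  exact Iff.rfl

theorem realize_ordFormula (M : ZFSet) (hM : M.IsTransitive) (a : {x : ZFSet // x ∈ M}) :
    ordFormula.Realize (M := {x : ZFSet // x ∈ M}) (fun _ => a) ↔ a.1.IsOrdinal := by
  simp only [ordFormula, memB, xvar, Formula.Realize, realize_inf, realize_all, realize_imp,
    realize_rel₂, Term.realize_var, Sum.elim_inl, Sum.elim_inr, relMap_mem,
    Matrix.cons_val_zero, Matrix.cons_val_one, Matrix.head_cons, Fin.snoc, Fin.isValue]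
  simp [Fin.snoc]


  constructor
  · rintro ⟨h1, h2⟩
    exact ⟨fun y hy z hz => h1 y (hM _ a.2 hy) hy z (hM _ (hM _ a.2 hy) hz) hz,
      fun {y z w} hyz hzw hwa => h2 y (hM z (hM w (hM _ a.2 hwa) hzw) hyz)
        z (hM w (hM _ a.2 hwa) hzw) w (hM _ a.2 hwa) hyz hzw hwa⟩
  · intro h
    exact ⟨fun y _ hy z _ hz => (h.isTransitive y hy) hz,
      fun y _ z _ w _ hyz hzw hwa => h.mem_trans' hyz hzw hwa⟩

theorem ElemOnSub.mem_iff {M N : ZFSet} {S : Set ZFSet}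
    {π : {a : ZFSet // a ∈ M} → {a : ZFSet // a ∈ N}} (h : ElemOnSub M N S π)
    (a b : {x : ZFSet // x ∈ M}) (ha : a.1 ∈ S) (hb : b.1 ∈ S) :
    a.1 ∈ b.1 ↔ (π a).1 ∈ (π b).1 := by
  have h2 := h 2 memFormula ![a, b] (by intro i; fin_cases i <;> assumption)
  have : π ∘ ![a, b] = ![π a, π b] := by funext i; fin_cases i <;> rfl
  rw [this, realize_memFormula, realize_memFormula] at h2
  exact h2

theorem ElemOnSub.ord_iff {M N : ZFSet} {S : Set ZFSet} (hM : M.IsTransitive)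
    (hN : N.IsTransitive) {π : {a : ZFSet // a ∈ M} → {a : ZFSet // a ∈ N}}
    (h : ElemOnSub M N S π) (a : {x : ZFSet // x ∈ M}) (ha : a.1 ∈ S) :
    a.1.IsOrdinal ↔ (π a).1.IsOrdinal := by
  have h2 := h 1 ordFormula (fun _ => a) (fun _ => ha)
  have heq : π ∘ (fun _ : Fin 1 => a) = fun _ => π a := rfl
  rw [heq, realize_ordFormula M hM, realize_ordFormula N hN] at h2
  exact h2

/-- Discontinuity of the branch embedding at `λ = On ∩ H` (Lemma 1.2): if `σ : H → H̃` is
the direct limit embedding along a branch, with limit maps `p ξ` elementary on the hulls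
`h[A_ξ ∪ {η_ξ}]`, thresholds `η_ξ` above all ordinals of `h[A_ξ]`, the hulls `h[A_ξ]`
covering `H`, and the thread `(η_ξ)` collapsing to a single point of `H̃`, then
`sup σ''(On ∩ H) < On ∩ H̃`: there is an ordinal of `H̃` above every `σ ζ`, `ζ ∈ On ∩ H`. -/
theorem stmt12 (δ : Cardinal.{1}) (hreg : δ.IsRegular) (hδ : ℵ₀ < δ)
    (H Ht : ZFSet) (hH : H.IsTransitive) (hHt : Ht.IsTransitive)
    (hHcard : Cardinal.mk H.toSet = δ)
    (hullA hullFull : Ordinal.{1} → Set ZFSet) (η : Ordinal.{1} → ZFSet)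
    (p : Ordinal.{1} → {a : ZFSet // a ∈ H} → {a : ZFSet // a ∈ Ht})
    (σ : {a : ZFSet // a ∈ H} → {a : ZFSet // a ∈ Ht})
    (hσ : ElemOnSub H Ht Set.univ σ)
    (hmono : ∀ ξ ξ' : Ordinal, ξ ≤ ξ' → hullA ξ ⊆ hullA ξ')
    (hsub : ∀ ξ : Ordinal, hullA ξ ⊆ hullFull ξ ∧ hullFull ξ ⊆ H.toSet)
    (hcov : ∀ x ∈ H.toSet, ∃ ξ, ξ < δ.ord ∧ x ∈ hullA ξ)
    (hη : ∀ ξ : Ordinal, ξ < δ.ord → (η ξ).IsOrdinal ∧ η ξ ∈ H ∧ η ξ ∈ hullFull ξ ∧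
      ∀ x ∈ hullA ξ, x.IsOrdinal → x ∈ η ξ)
    (helem : ∀ ξ : Ordinal, ξ < δ.ord → ElemOnSub H Ht (hullFull ξ) (p ξ))
    (hagree : ∀ ξ : Ordinal, ξ < δ.ord → ∀ (x : ZFSet) (hx : x ∈ H), x ∈ hullA ξ →
      σ ⟨x, hx⟩ = p ξ ⟨x, hx⟩)
    (hthread : ∀ ξ ξ' : Ordinal, ξ < δ.ord → ξ' < δ.ord →
      ∀ (h1 : η ξ ∈ H) (h2 : η ξ' ∈ H), p ξ ⟨η ξ, h1⟩ = p ξ' ⟨η ξ', h2⟩) :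
    ∃ g : ZFSet, g ∈ Ht ∧ g.IsOrdinal ∧
      ∀ (x : ZFSet) (hx : x ∈ H), x.IsOrdinal → (σ ⟨x, hx⟩).1 ∈ g := by
  have h0 : (0 : Ordinal) < δ.ord := by
    have : (ℵ₀ : Cardinal).ord ≤ δ.ord := Cardinal.ord_le_ord.2 hδ.le
    have h1 : (0 : Ordinal) < (ℵ₀ : Cardinal).ord := by
      rw [Cardinal.ord_aleph0]; exact Ordinal.omega0_pos
    exact lt_of_lt_of_le h1 this
  obtain ⟨hord0, hη0H, hη0F, -⟩ := hη 0 h0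
  refine ⟨(p 0 ⟨η 0, hη0H⟩).1, (p 0 ⟨η 0, hη0H⟩).2, ?_, ?_⟩
  · exact ((helem 0 h0).ord_iff hH hHt ⟨η 0, hη0H⟩ hη0F).1 hord0
  · intro x hx hxord
    obtain ⟨ξ, hξ, hxA⟩ := hcov x hx
    obtain ⟨hordξ, hηH, hηF, hbig⟩ := hη ξ hξ
    have hxη : x ∈ η ξ := hbig x hxA hxord
    have hmem : (p ξ ⟨x, hx⟩).1 ∈ (p ξ ⟨η ξ, hηH⟩).1 :=
      ((helem ξ hξ).mem_iff ⟨x, hx⟩ ⟨η ξ, hηH⟩ ((hsub ξ).1 hxA) hηF).1 hxη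
    rw [hagree ξ hξ x hx hxA, ← hthread ξ 0 hξ h0 hηH hη0H]
    exact hmem
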